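/- Suppose the a-posteriori set G_y is nonempty, the family {ℓ_k}_{k=0}^{N+1} belongs to L, ({x̂_k}_{k=0}^{N+1}, {z_k}_{k=0}^{N+1}) is a solution of the boundary-value system F_k' z_k − C_k' z_{k+1} = H_k' R_k (y_k − H_k x̂_k) for k = 0,…,N; F_{k+1} x̂_{k+1} − C_k x̂_k = B_k Q_k^{−1} B_k' z_{k+1} for k = 0,…,N; F_0 x̂_0 = B_{−1} Q_{−1}^{−1} B_{−1}' z_0; F_{N+1}' z_{N+1} = 0, and ({p_k}_{k=0}^{N+1}, {d_k}_{k=0}^{N+1}) is a solution of the system F_{k+1} p_{k+1} = C_k p_k + B_k Q_k^{−1} B_k' d_{k+1} for k = 0,…,N; F_k' d_k = C_k' d_{k+1} + ℓ_k − H_k' R_k H_k p_k for k = 0,…,N; F_{N+1}' d_{N+1} = ℓ_{N+1}; F_0 p_0 = B_{−1} Q_{−1}^{−1} B_{−1}' d_0. Then the minimax a-posteriori error of the estimation ℓ̂ = Σ_{k=0}^{N+1} (ℓ_k, x̂_k) equals σ̂ = (1 − Σ_{k=0}^{N} (y_k, R_k(y_k − H_k x̂_k)))^{1/2} · (Σ_{k=0}^{N+1}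 (ℓ_k, p_k))^{1/2}. -/

import Mathlib

open Matrix

/-!  Index conventions.  The state sequence `x_0,…,x_{N+1}` is a function
`Fin (N+2) → Fin n → ℝ`.  The disturbance sequence `f_{-1},…,f_N` and the
data `B_{-1},…,B_N`, `Q_{-1},…,Q_N` are shifted by one, so `f j`, `B j`,
`Q j` (for `j : Fin (N+2)`) stand for `f_{j-1}`, `B_{j-1}`, `Q_{j-1}`. -/

/-- The constraint set `𝒩` of pairs `({x_k}_{0}^{N+1}, {f_k}_{-1}^{N})` with
`F_{k+1} x_{k+1} - C_k x_k = B_k f_k` (k = 0,…,N) and `F_0 x_0 = B_{-1} f_{-1}`. -/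
def NSet {N m n p : ℕ} (F : Fin (N + 2) → Matrix (Fin m) (Fin n) ℝ)
    (C : Fin (N + 1) → Matrix (Fin m) (Fin n) ℝ)
    (B : Fin (N + 2) → Matrix (Fin m) (Fin p) ℝ) :
    Set ((Fin (N + 2) → Fin n → ℝ) × (Fin (N + 2) → Fin p → ℝ)) :=
  {xf | (∀ k : Fin (N + 1),
      F k.succ *ᵥ xf.1 k.succ - C k *ᵥ xf.1 k.castSucc = B k.succ *ᵥ xf.2 k.succ) ∧
    F 0 *ᵥ xf.1 0 = B 0 *ᵥ xf.2 0}

/-- The functional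
`J_y({f},{x}) = Σ_{k=-1}^{N} (Q_k f_k, f_k) + Σ_{k=0}^{N} (R_k(y_k - H_k x_k), y_k - H_k x_k)`. -/
def Jfun {N n p q : ℕ} (H : Fin (N + 1) → Matrix (Fin q) (Fin n) ℝ)
    (Q : Fin (N + 2) → Matrix (Fin p) (Fin p) ℝ)
    (R : Fin (N + 1) → Matrix (Fin q) (Fin q) ℝ)
    (y : Fin (N + 1) → Fin q → ℝ)
    (f : Fin (N + 2) → Fin p → ℝ) (x : Fin (N + 2) → Fin n → ℝ) : ℝ :=
  (∑ j : Fin (N + 2), (Q j *ᵥ f j) ⬝ᵥ f j) +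
    ∑ k : Fin (N + 1),
      (R k *ᵥ (y k - H k *ᵥ x k.castSucc)) ⬝ᵥ (y k - H k *ᵥ x k.castSucc)

/-- The a-posteriori set `G_y`. -/
def GSet {N m n p q : ℕ} (F : Fin (N + 2) → Matrix (Fin m) (Fin n) ℝ)
    (C : Fin (N + 1) → Matrix (Fin m) (Fin n) ℝ)
    (H : Fin (N + 1) → Matrix (Fin q) (Fin n) ℝ)
    (B : Fin (N + 2) → Matrix (Fin m) (Fin p) ℝ)
    (Q : Fin (N + 2) → Matrix (Fin p) (Fin p) ℝ)
    (R : Fin (N + 1) → Matrix (Fin q) (Fin q) ℝ)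
    (y : Fin (N + 1) → Fin q → ℝ) : Set (Fin (N + 2) → Fin n → ℝ) :=
  {x | ∃ f, (x, f) ∈ NSet F C B ∧ Jfun H Q R y f x ≤ 1}

/-- `ℓ({x_k}) = Σ_{k=0}^{N+1} (ℓ_k, x_k)`. -/
def lfun {N n : ℕ} (l : Fin (N + 2) → Fin n → ℝ) (x : Fin (N + 2) → Fin n → ℝ) : ℝ :=
  ∑ k : Fin (N + 2), l k ⬝ᵥ x k

/-- Membership of the family `{ℓ_k}_{0}^{N+1}` in the set `L`: there are
`z_k ∈ ℝ^m` and `u_k ∈ ℝ^q` with `ℓ_k = F_k' z_k - C_k' z_{k+1} + H_k' u_k`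
(k = 0,…,N) and `F_{N+1}' z_{N+1} = ℓ_{N+1}`. -/
def memL {N m n q : ℕ} (F : Fin (N + 2) → Matrix (Fin m) (Fin n) ℝ)
    (C : Fin (N + 1) → Matrix (Fin m) (Fin n) ℝ)
    (H : Fin (N + 1) → Matrix (Fin q) (Fin n) ℝ)
    (l : Fin (N + 2) → Fin n → ℝ) : Prop :=
  ∃ (z : Fin (N + 2) → Fin m → ℝ) (u : Fin (N + 1) → Fin q → ℝ),
    (∀ k : Fin (N + 1),
      l k.castSucc =
        (F k.castSucc)ᵀ *ᵥ z k.castSucc - (C k)ᵀ *ᵥ z k.succ + (H k)ᵀ *ᵥ u k) ∧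
    (F (Fin.last (N + 1)))ᵀ *ᵥ z (Fin.last (N + 1)) = l (Fin.last (N + 1))

/-- `lhat` is a minimax a-posteriori estimation of the linear function `lf` over `G`:
`sup_{x ∈ G} |lf x - lhat| = inf_{x̃ ∈ G} sup_{x ∈ G} |lf x - lf x̃|`
(suprema and infima taken in the extended reals). -/
def IsMinimaxEstimate {N n : ℕ} (G : Set (Fin (N + 2) → Fin n → ℝ))
    (lf : (Fin (N + 2) → Fin n → ℝ) → ℝ) (lhat : ℝ) : Prop :=
  (⨆ x ∈ G, (↑|lf x - lhat| : EReal)) =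
    ⨅ xt ∈ G, ⨆ x ∈ G, (↑|lf x - lf xt| : EReal)

/-- The boundary-value system
`F_k' z_k - C_k' z_{k+1} = H_k' R_k (y_k - H_k x̂_k)` (k = 0,…,N),
`F_{k+1} x̂_{k+1} - C_k x̂_k = B_k Q_k⁻¹ B_k' z_{k+1}` (k = 0,…,N),
`F_0 x̂_0 = B_{-1} Q_{-1}⁻¹ B_{-1}' z_0`, `F_{N+1}' z_{N+1} = 0`. -/
def BVP {N m n p q : ℕ} (F : Fin (N + 2) → Matrix (Fin m) (Fin n) ℝ)
    (C : Fin (N + 1) → Matrix (Fin m) (Fin n) ℝ)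
    (H : Fin (N + 1) → Matrix (Fin q) (Fin n) ℝ)
    (B : Fin (N + 2) → Matrix (Fin m) (Fin p) ℝ)
    (Q : Fin (N + 2) → Matrix (Fin p) (Fin p) ℝ)
    (R : Fin (N + 1) → Matrix (Fin q) (Fin q) ℝ)
    (y : Fin (N + 1) → Fin q → ℝ)
    (xh : Fin (N + 2) → Fin n → ℝ) (z : Fin (N + 2) → Fin m → ℝ) : Prop :=
  (∀ k : Fin (N + 1),
      (F k.castSucc)ᵀ *ᵥ z k.castSucc - (C k)ᵀ *ᵥ z k.succ =
        (H k)ᵀ *ᵥ (R k *ᵥ (y k - H k *ᵥ xh k.castSucc))) ∧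
  (∀ k : Fin (N + 1),
      F k.succ *ᵥ xh k.succ - C k *ᵥ xh k.castSucc =
        B k.succ *ᵥ ((Q k.succ)⁻¹ *ᵥ ((B k.succ)ᵀ *ᵥ z k.succ))) ∧
  F 0 *ᵥ xh 0 = B 0 *ᵥ ((Q 0)⁻¹ *ᵥ ((B 0)ᵀ *ᵥ z 0)) ∧
  (F (Fin.last (N + 1)))ᵀ *ᵥ z (Fin.last (N + 1)) = 0

/-- The auxiliary system for `({p_k},{d_k})`:
`F_{k+1} p_{k+1} = C_k p_k + B_k Q_k⁻¹ B_k' d_{k+1}` (k = 0,…,N),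
`F_k' d_k = C_k' d_{k+1} + ℓ_k - H_k' R_k H_k p_k` (k = 0,…,N),
`F_{N+1}' d_{N+1} = ℓ_{N+1}`, `F_0 p_0 = B_{-1} Q_{-1}⁻¹ B_{-1}' d_0`. -/
def BVP2 {N m n p q : ℕ} (F : Fin (N + 2) → Matrix (Fin m) (Fin n) ℝ)
    (C : Fin (N + 1) → Matrix (Fin m) (Fin n) ℝ)
    (H : Fin (N + 1) → Matrix (Fin q) (Fin n) ℝ)
    (B : Fin (N + 2) → Matrix (Fin m) (Fin p) ℝ)
    (Q : Fin (N + 2) → Matrix (Fin p) (Fin p) ℝ)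
    (R : Fin (N + 1) → Matrix (Fin q) (Fin q) ℝ)
    (l : Fin (N + 2) → Fin n → ℝ)
    (pv : Fin (N + 2) → Fin n → ℝ) (d : Fin (N + 2) → Fin m → ℝ) : Prop :=
  (∀ k : Fin (N + 1),
      F k.succ *ᵥ pv k.succ =
        C k *ᵥ pv k.castSucc + B k.succ *ᵥ ((Q k.succ)⁻¹ *ᵥ ((B k.succ)ᵀ *ᵥ d k.succ))) ∧
  (∀ k : Fin (N + 1),
      (F k.castSucc)ᵀ *ᵥ d k.castSucc =
        (C k)ᵀ *ᵥ d k.succ + l k.castSucc - (H k)ᵀ *ᵥ (R k *ᵥ (H k *ᵥ pv k.castSucc))) ∧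
  (F (Fin.last (N + 1)))ᵀ *ᵥ d (Fin.last (N + 1)) = l (Fin.last (N + 1)) ∧
  F 0 *ᵥ pv 0 = B 0 *ᵥ ((Q 0)⁻¹ *ᵥ ((B 0)ᵀ *ᵥ d 0))

/-- under the hypotheses of Theorem 1, the minimax a-posteriori
error of the estimation `ℓ̂ = Σ (ℓ_k, x̂_k)` equals
`σ̂ = (1 - Σ (y_k, R_k(y_k - H_k x̂_k)))^½ · (Σ (ℓ_k, p_k))^½`. -/


lemma dotT {m n : ℕ} (M : Matrix (Fin m) (Fin n) ℝ) (a : Fin m → ℝ) (b : Fin n → ℝ) :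
    (Mᵀ *ᵥ a) ⬝ᵥ b = a ⬝ᵥ (M *ᵥ b) := by
  rw [Matrix.mulVec_transpose, ← Matrix.dotProduct_mulVec]

lemma symdot {n : ℕ} {M : Matrix (Fin n) (Fin n) ℝ} (hM : Mᵀ = M) (a b : Fin n → ℝ) :
    (M *ᵥ a) ⬝ᵥ b = a ⬝ᵥ (M *ᵥ b) := by
  conv_lhs => rw [← hM]
  rw [dotT]

lemma telescope {N m n p : ℕ} (F : Fin (N + 2) → Matrix (Fin m) (Fin n) ℝ)
    (C : Fin (N + 1) → Matrix (Fin m) (Fin n) ℝ)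
    (B : Fin (N + 2) → Matrix (Fin m) (Fin p) ℝ)
    (z : Fin (N + 2) → Fin m → ℝ) (w : Fin (N + 2) → Fin n → ℝ)
    (g : Fin (N + 2) → Fin p → ℝ)
    (h1 : ∀ k : Fin (N + 1), F k.succ *ᵥ w k.succ - C k *ᵥ w k.castSucc = B k.succ *ᵥ g k.succ)
    (h0 : F 0 *ᵥ w 0 = B 0 *ᵥ g 0) :
    ∑ j : Fin (N + 2), ((B j)ᵀ *ᵥ z j) ⬝ᵥ g j =
      (∑ k : Fin (N + 1),
        (((F k.castSucc)ᵀ *ᵥ z k.castSucc - (C k)ᵀ *ᵥ z k.succ) ⬝ᵥ w k.castSucc)) +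
      ((F (Fin.last (N + 1)))ᵀ *ᵥ z (Fin.last (N + 1))) ⬝ᵥ w (Fin.last (N + 1)) := by
  have e0 : ∀ j, ((B j)ᵀ *ᵥ z j) ⬝ᵥ g j = z j ⬝ᵥ (B j *ᵥ g j) := fun j => dotT _ _ _
  calc ∑ j : Fin (N + 2), ((B j)ᵀ *ᵥ z j) ⬝ᵥ g j
      = ∑ j : Fin (N + 2), z j ⬝ᵥ (B j *ᵥ g j) := Finset.sum_congr rfl fun j _ => e0 j
    _ = z 0 ⬝ᵥ (B 0 *ᵥ g 0) + ∑ k : Fin (N + 1), z k.succ ⬝ᵥ (B k.succ *ᵥ g k.succ) :=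
        Fin.sum_univ_succ _
    _ = z 0 ⬝ᵥ (F 0 *ᵥ w 0) + ∑ k : Fin (N + 1),
          (z k.succ ⬝ᵥ (F k.succ *ᵥ w k.succ) - z k.succ ⬝ᵥ (C k *ᵥ w k.castSucc)) := by
        rw [← h0]
        congr 1
        refine Finset.sum_congr rfl fun k _ => ?_
        rw [← dotProduct_sub, h1 k]
    _ = (z 0 ⬝ᵥ (F 0 *ᵥ w 0) + ∑ k : Fin (N + 1), z k.succ ⬝ᵥ (F k.succ *ᵥ w k.succ))
          - ∑ k : Fin (N + 1), z k.succ ⬝ᵥ (C k *ᵥ w k.castSucc) := by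
        rw [Finset.sum_sub_distrib]; ring
    _ = (∑ j : Fin (N + 2), z j ⬝ᵥ (F j *ᵥ w j))
          - ∑ k : Fin (N + 1), z k.succ ⬝ᵥ (C k *ᵥ w k.castSucc) := by
        rw [Fin.sum_univ_succ (fun j => z j ⬝ᵥ (F j *ᵥ w j))]
    _ = ((∑ k : Fin (N + 1), z k.castSucc ⬝ᵥ (F k.castSucc *ᵥ w k.castSucc))
          + z (Fin.last (N + 1)) ⬝ᵥ (F (Fin.last (N + 1)) *ᵥ w (Fin.last (N + 1))))
          - ∑ k : Fin (N + 1), z k.succ ⬝ᵥ (C k *ᵥ w k.castSucc) := by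
        rw [Fin.sum_univ_castSucc (f := fun j => z j ⬝ᵥ (F j *ᵥ w j))]
    _ = _ := by
        simp only [sub_dotProduct, dotT, Finset.sum_sub_distrib]
        ring

/-- homogeneous quadratic form -/
def Jh {N n p q : ℕ} (H : Fin (N + 1) → Matrix (Fin q) (Fin n) ℝ)
    (Q : Fin (N + 2) → Matrix (Fin p) (Fin p) ℝ)
    (R : Fin (N + 1) → Matrix (Fin q) (Fin q) ℝ)
    (g : Fin (N + 2) → Fin p → ℝ) (w : Fin (N + 2) → Fin n → ℝ) : ℝ :=
  (∑ j : Fin (N + 2), (Q j *ᵥ g j) ⬝ᵥ g j) +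
    ∑ k : Fin (N + 1), (R k *ᵥ (H k *ᵥ w k.castSucc)) ⬝ᵥ (H k *ᵥ w k.castSucc)

/-- associated bilinear form -/
def Bb {N n p q : ℕ} (H : Fin (N + 1) → Matrix (Fin q) (Fin n) ℝ)
    (Q : Fin (N + 2) → Matrix (Fin p) (Fin p) ℝ)
    (R : Fin (N + 1) → Matrix (Fin q) (Fin q) ℝ)
    (g : Fin (N + 2) → Fin p → ℝ) (w : Fin (N + 2) → Fin n → ℝ)
    (g' : Fin (N + 2) → Fin p → ℝ) (w' : Fin (N + 2) → Fin n → ℝ) : ℝ :=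
  (∑ j : Fin (N + 2), (Q j *ᵥ g j) ⬝ᵥ g' j) +
    ∑ k : Fin (N + 1), (R k *ᵥ (H k *ᵥ w k.castSucc)) ⬝ᵥ (H k *ᵥ w' k.castSucc)

lemma Jh_nonneg {N n p q : ℕ} {H : Fin (N + 1) → Matrix (Fin q) (Fin n) ℝ}
    {Q : Fin (N + 2) → Matrix (Fin p) (Fin p) ℝ}
    {R : Fin (N + 1) → Matrix (Fin q) (Fin q) ℝ}
    (hQ : ∀ j, (Q j).PosDef) (hR : ∀ k, (R k).PosDef)
    (g : Fin (N + 2) → Fin p → ℝ) (w : Fin (N + 2) → Fin n → ℝ) :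
    0 ≤ Jh H Q R g w := by
  have h1 : ∀ j, (0:ℝ) ≤ (Q j *ᵥ g j) ⬝ᵥ g j := fun j => by
    rw [dotProduct_comm]
    have h := (hQ j).posSemidef.dotProduct_mulVec_nonneg (g j)
    rwa [star_trivial] at h
  have h2 : ∀ k, (0:ℝ) ≤ (R k *ᵥ (H k *ᵥ w k.castSucc)) ⬝ᵥ (H k *ᵥ w k.castSucc) := fun k => by
    rw [dotProduct_comm]
    have h := (hR k).posSemidef.dotProduct_mulVec_nonneg (H k *ᵥ w k.castSucc)
    rwa [star_trivial] at h
  exact add_nonneg (Finset.sum_nonneg fun j _ => h1 j) (Finset.sum_nonneg fun k _ => h2 k)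

lemma Jh_add_smul {N n p q : ℕ} {H : Fin (N + 1) → Matrix (Fin q) (Fin n) ℝ}
    {Q : Fin (N + 2) → Matrix (Fin p) (Fin p) ℝ}
    {R : Fin (N + 1) → Matrix (Fin q) (Fin q) ℝ}
    (hQs : ∀ j, (Q j)ᵀ = Q j) (hRs : ∀ k, (R k)ᵀ = R k)
    (g : Fin (N + 2) → Fin p → ℝ) (w : Fin (N + 2) → Fin n → ℝ)
    (g' : Fin (N + 2) → Fin p → ℝ) (w' : Fin (N + 2) → Fin n → ℝ) (t : ℝ) :
    Jh H Q R (g + t • g') (w + t • w') =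
      Jh H Q R g w + 2 * t * Bb H Q R g w g' w' + t ^ 2 * Jh H Q R g' w' := by
  have key : ∀ (r : ℕ) (M : Matrix (Fin r) (Fin r) ℝ), Mᵀ = M → ∀ a b : Fin r → ℝ,
      (M *ᵥ (a + t • b)) ⬝ᵥ (a + t • b) =
        (M *ᵥ a) ⬝ᵥ a + 2 * t * ((M *ᵥ a) ⬝ᵥ b) + t ^ 2 * ((M *ᵥ b) ⬝ᵥ b) := by
    intro r M hM a b
    have hsym : (M *ᵥ b) ⬝ᵥ a = (M *ᵥ a) ⬝ᵥ b := by
      rw [symdot hM b a, dotProduct_comm]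
    simp only [Matrix.mulVec_add, Matrix.mulVec_smul, add_dotProduct,
      dotProduct_add, smul_dotProduct, dotProduct_smul,
      smul_eq_mul, hsym]
    ring
  simp only [Jh, Bb]
  have hq : ∀ j : Fin (N + 2), (Q j *ᵥ ((g + t • g') j)) ⬝ᵥ ((g + t • g') j) =
      (Q j *ᵥ g j) ⬝ᵥ g j + 2 * t * ((Q j *ᵥ g j) ⬝ᵥ g' j)
        + t ^ 2 * ((Q j *ᵥ g' j) ⬝ᵥ g' j) := by
    intro j
    have := key p (Q j) (hQs j) (g j) (g' j)
    simpa using this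
  have hr : ∀ k : Fin (N + 1),
      (R k *ᵥ (H k *ᵥ ((w + t • w') k.castSucc))) ⬝ᵥ (H k *ᵥ ((w + t • w') k.castSucc)) =
      (R k *ᵥ (H k *ᵥ w k.castSucc)) ⬝ᵥ (H k *ᵥ w k.castSucc)
        + 2 * t * ((R k *ᵥ (H k *ᵥ w k.castSucc)) ⬝ᵥ (H k *ᵥ w' k.castSucc))
        + t ^ 2 * ((R k *ᵥ (H k *ᵥ w' k.castSucc)) ⬝ᵥ (H k *ᵥ w' k.castSucc)) := by
    intro k
    have harg : H k *ᵥ ((w + t • w') k.castSucc) =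
        H k *ᵥ w k.castSucc + t • (H k *ᵥ w' k.castSucc) := by
      simp [Matrix.mulVec_add, Matrix.mulVec_smul]
    rw [harg]
    exact key q (R k) (hRs k) _ _
  rw [Finset.sum_congr rfl fun j _ => hq j, Finset.sum_congr rfl fun k _ => hr k]
  simp only [Finset.sum_add_distrib]
  rw [← Finset.mul_sum, ← Finset.mul_sum, ← Finset.mul_sum, ← Finset.mul_sum]
  ring

lemma sqexp {r : ℕ} {M : Matrix (Fin r) (Fin r) ℝ} (hM : Mᵀ = M) (a b : Fin r → ℝ) :
    (M *ᵥ (a + b)) ⬝ᵥ (a + b) =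
      (M *ᵥ a) ⬝ᵥ a + 2 * ((M *ᵥ a) ⬝ᵥ b) + (M *ᵥ b) ⬝ᵥ b := by
  have hsym : (M *ᵥ b) ⬝ᵥ a = (M *ᵥ a) ⬝ᵥ b := by
    rw [symdot hM b a, dotProduct_comm]
  simp only [Matrix.mulVec_add, add_dotProduct, dotProduct_add, hsym]
  ring

lemma sqexp' {r : ℕ} {M : Matrix (Fin r) (Fin r) ℝ} (hM : Mᵀ = M) (a b : Fin r → ℝ) :
    (M *ᵥ (a - b)) ⬝ᵥ (a - b) =
      (M *ᵥ a) ⬝ᵥ a - 2 * ((M *ᵥ a) ⬝ᵥ b) + (M *ᵥ b) ⬝ᵥ b := by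
  have hsym : (M *ᵥ b) ⬝ᵥ a = (M *ᵥ a) ⬝ᵥ b := by
    rw [symdot hM b a, dotProduct_comm]
  simp only [Matrix.mulVec_sub, sub_dotProduct, dotProduct_sub, hsym]
  ring

lemma Jh_smul {N n p q : ℕ} (H : Fin (N + 1) → Matrix (Fin q) (Fin n) ℝ)
    (Q : Fin (N + 2) → Matrix (Fin p) (Fin p) ℝ)
    (R : Fin (N + 1) → Matrix (Fin q) (Fin q) ℝ)
    (g : Fin (N + 2) → Fin p → ℝ) (w : Fin (N + 2) → Fin n → ℝ) (s : ℝ) :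
    Jh H Q R (s • g) (s • w) = s ^ 2 * Jh H Q R g w := by
  simp only [Jh, Pi.smul_apply, Matrix.mulVec_smul, smul_dotProduct,
    dotProduct_smul, smul_eq_mul]
  rw [mul_add, Finset.mul_sum, Finset.mul_sum]
  congr 1 <;> refine Finset.sum_congr rfl fun j _ => by ring

lemma Bb_comm {N n p q : ℕ} {H : Fin (N + 1) → Matrix (Fin q) (Fin n) ℝ}
    {Q : Fin (N + 2) → Matrix (Fin p) (Fin p) ℝ}
    {R : Fin (N + 1) → Matrix (Fin q) (Fin q) ℝ}
    (hQs : ∀ j, (Q j)ᵀ = Q j) (hRs : ∀ k, (R k)ᵀ = R k)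
    (g : Fin (N + 2) → Fin p → ℝ) (w : Fin (N + 2) → Fin n → ℝ)
    (g' : Fin (N + 2) → Fin p → ℝ) (w' : Fin (N + 2) → Fin n → ℝ) :
    Bb H Q R g w g' w' = Bb H Q R g' w' g w := by
  simp only [Bb]
  congr 1
  · exact Finset.sum_congr rfl fun j _ => by
      rw [symdot (hQs j) (g j) (g' j), dotProduct_comm]
  · exact Finset.sum_congr rfl fun k _ => by
      rw [symdot (hRs k) _ _, dotProduct_comm]

lemma Bb_sq_le {N n p q : ℕ} {H : Fin (N + 1) → Matrix (Fin q) (Fin n) ℝ}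
    {Q : Fin (N + 2) → Matrix (Fin p) (Fin p) ℝ}
    {R : Fin (N + 1) → Matrix (Fin q) (Fin q) ℝ}
    (hQ : ∀ j, (Q j).PosDef) (hR : ∀ k, (R k).PosDef)
    (g : Fin (N + 2) → Fin p → ℝ) (w : Fin (N + 2) → Fin n → ℝ)
    (g' : Fin (N + 2) → Fin p → ℝ) (w' : Fin (N + 2) → Fin n → ℝ) :
    (Bb H Q R g' w' g w) ^ 2 ≤ Jh H Q R g' w' * Jh H Q R g w := by
  have hQs : ∀ j, (Q j)ᵀ = Q j := fun j => by have h := (hQ j).isHermitian; rwa [Matrix.IsHermitian, Matrix.conjTranspose_eq_transpose_of_trivial] at h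
  have hRs : ∀ k, (R k)ᵀ = R k := fun k => by have h := (hR k).isHermitian; rwa [Matrix.IsHermitian, Matrix.conjTranspose_eq_transpose_of_trivial] at h
  have hpoly : ∀ t : ℝ, 0 ≤ Jh H Q R g' w' * (t * t) + (2 * Bb H Q R g' w' g w) * t
      + Jh H Q R g w := by
    intro t
    have h := Jh_add_smul (H := H) hQs hRs g w g' w' t
    have h0 := Jh_nonneg (H := H) hQ hR (g + t • g') (w + t • w')
    rw [h] at h0
    rw [Bb_comm hQs hRs g' w' g w]
    nlinarith [h0]
  have hd := discrim_le_zero hpoly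
  simp only [discrim] at hd
  nlinarith [hd]

lemma Jfun_decomp {N n p q : ℕ} {H : Fin (N + 1) → Matrix (Fin q) (Fin n) ℝ}
    {Q : Fin (N + 2) → Matrix (Fin p) (Fin p) ℝ}
    {R : Fin (N + 1) → Matrix (Fin q) (Fin q) ℝ}
    (hQs : ∀ j, (Q j)ᵀ = Q j) (hRs : ∀ k, (R k)ᵀ = R k)
    (y : Fin (N + 1) → Fin q → ℝ)
    (f fh : Fin (N + 2) → Fin p → ℝ) (x xh : Fin (N + 2) → Fin n → ℝ) :
    Jfun H Q R y f x = Jfun H Q R y fh xh + Jh H Q R (f - fh) (x - xh)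
      + 2 * ((∑ j : Fin (N + 2), (Q j *ᵥ fh j) ⬝ᵥ ((f - fh) j))
        - ∑ k : Fin (N + 1), (R k *ᵥ (y k - H k *ᵥ xh k.castSucc)) ⬝ᵥ
            (H k *ᵥ ((x - xh) k.castSucc))) := by
  have hq : ∀ j : Fin (N + 2), (Q j *ᵥ f j) ⬝ᵥ f j =
      (Q j *ᵥ fh j) ⬝ᵥ fh j + 2 * ((Q j *ᵥ fh j) ⬝ᵥ ((f - fh) j))
        + (Q j *ᵥ ((f - fh) j)) ⬝ᵥ ((f - fh) j) := by
    intro j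
    have h := sqexp (hQs j) (fh j) ((f - fh) j)
    rw [show fh j + (f - fh) j = f j from by simp] at h
    exact h
  have hr : ∀ k : Fin (N + 1),
      (R k *ᵥ (y k - H k *ᵥ x k.castSucc)) ⬝ᵥ (y k - H k *ᵥ x k.castSucc) =
      (R k *ᵥ (y k - H k *ᵥ xh k.castSucc)) ⬝ᵥ (y k - H k *ᵥ xh k.castSucc)
        - 2 * ((R k *ᵥ (y k - H k *ᵥ xh k.castSucc)) ⬝ᵥ (H k *ᵥ ((x - xh) k.castSucc)))
        + (R k *ᵥ (H k *ᵥ ((x - xh) k.castSucc))) ⬝ᵥ (H k *ᵥ ((x - xh) k.castSucc)) := by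
    intro k
    have h := sqexp' (hRs k) (y k - H k *ᵥ xh k.castSucc) (H k *ᵥ ((x - xh) k.castSucc))
    rw [show y k - H k *ᵥ xh k.castSucc - H k *ᵥ ((x - xh) k.castSucc)
        = y k - H k *ᵥ x k.castSucc from by
      simp only [Pi.sub_apply, Matrix.mulVec_sub]; abel] at h
    exact h
  simp only [Jfun, Jh]
  rw [Finset.sum_congr rfl fun j _ => hq j, Finset.sum_congr rfl fun k _ => hr k]
  simp only [Finset.sum_add_distrib, Finset.sum_sub_distrib]
  rw [← Finset.mul_sum, ← Finset.mul_sum]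
  ring

theorem stmt1 {N m n p q : ℕ}
    (F : Fin (N + 2) → Matrix (Fin m) (Fin n) ℝ)
    (C : Fin (N + 1) → Matrix (Fin m) (Fin n) ℝ)
    (H : Fin (N + 1) → Matrix (Fin q) (Fin n) ℝ)
    (B : Fin (N + 2) → Matrix (Fin m) (Fin p) ℝ)
    (Q : Fin (N + 2) → Matrix (Fin p) (Fin p) ℝ)
    (R : Fin (N + 1) → Matrix (Fin q) (Fin q) ℝ)
    (y : Fin (N + 1) → Fin q → ℝ)
    (hQ : ∀ j, (Q j).PosDef) (hR : ∀ k, (R k).PosDef)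
    (hG : (GSet F C H B Q R y).Nonempty)
    (l : Fin (N + 2) → Fin n → ℝ) (hl : memL F C H l)
    (xh : Fin (N + 2) → Fin n → ℝ) (z : Fin (N + 2) → Fin m → ℝ)
    (hbvp : BVP F C H B Q R y xh z)
    (pv : Fin (N + 2) → Fin n → ℝ) (d : Fin (N + 2) → Fin m → ℝ)
    (hbvp2 : BVP2 F C H B Q R l pv d) :
    IsMinimaxEstimate (GSet F C H B Q R y) (lfun l) (∑ k : Fin (N + 2), l k ⬝ᵥ xh k) ∧
    (⨆ x ∈ GSet F C H B Q R y,
        (↑|lfun l x - ∑ k : Fin (N + 2), l k ⬝ᵥ xh k| : EReal)) =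
      ((Real.sqrt (1 - ∑ k : Fin (N + 1), y k ⬝ᵥ (R k *ᵥ (y k - H k *ᵥ xh k.castSucc))) *
        Real.sqrt (∑ k : Fin (N + 2), l k ⬝ᵥ pv k) : ℝ) : EReal) := by

  classical
  obtain ⟨hb1, hb2, hb3, hb4⟩ := hbvp
  obtain ⟨hp1, hp2, hp3, hp4⟩ := hbvp2
  have hQs : ∀ j, (Q j)ᵀ = Q j := fun j => by have h := (hQ j).isHermitian; rwa [Matrix.IsHermitian, Matrix.conjTranspose_eq_transpose_of_trivial] at h
  have hRs : ∀ k, (R k)ᵀ = R k := fun k => by have h := (hR k).isHermitian; rwa [Matrix.IsHermitian, Matrix.conjTranspose_eq_transpose_of_trivial] at h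
  set fh : Fin (N + 2) → Fin p → ℝ := fun j => (Q j)⁻¹ *ᵥ ((B j)ᵀ *ᵥ z j) with hfh
  set gh : Fin (N + 2) → Fin p → ℝ := fun j => (Q j)⁻¹ *ᵥ ((B j)ᵀ *ᵥ d j) with hgh
  have hQmul : ∀ (j) (v : Fin p → ℝ), Q j *ᵥ ((Q j)⁻¹ *ᵥ v) = v := by
    intro j v
    rw [Matrix.mulVec_mulVec,
      Matrix.mul_nonsing_inv _ (isUnit_iff_ne_zero.2 (hQ j).det_pos.ne'), Matrix.one_mulVec]
  have Qfh : ∀ j, Q j *ᵥ fh j = (B j)ᵀ *ᵥ z j := fun j => hQmul j _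
  have Qgh : ∀ j, Q j *ᵥ gh j = (B j)ᵀ *ᵥ d j := fun j => hQmul j _
  -- (xh, fh) satisfies the constraints
  have hb2' : ∀ k : Fin (N + 1),
      F k.succ *ᵥ xh k.succ - C k *ᵥ xh k.castSucc = B k.succ *ᵥ fh k.succ := by
    intro k; simp only [hfh]; exact hb2 k
  have hb3' : F 0 *ᵥ xh 0 = B 0 *ᵥ fh 0 := by
    simp only [hfh]; exact hb3
  -- (pv, gh) satisfies the homogeneous constraints
  have hph1 : ∀ k : Fin (N + 1),
      F k.succ *ᵥ pv k.succ - C k *ᵥ pv k.castSucc = B k.succ *ᵥ gh k.succ := by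
    intro k; simp only [hgh]; rw [hp1 k]; abel
  have hph0 : F 0 *ᵥ pv 0 = B 0 *ᵥ gh 0 := by
    simp only [hgh]; exact hp4
  -- homogeneous differences
  have hsub1 : ∀ (x : Fin (N + 2) → Fin n → ℝ) (f : Fin (N + 2) → Fin p → ℝ),
      (∀ k : Fin (N + 1),
        F k.succ *ᵥ x k.succ - C k *ᵥ x k.castSucc = B k.succ *ᵥ f k.succ) →
      ∀ k : Fin (N + 1),
        F k.succ *ᵥ (x - xh) k.succ - C k *ᵥ (x - xh) k.castSucc
          = B k.succ *ᵥ (f - fh) k.succ := by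
    intro x f h1 k
    simp only [Pi.sub_apply, Matrix.mulVec_sub]
    have e : (F k.succ *ᵥ x k.succ - F k.succ *ᵥ xh k.succ)
        - (C k *ᵥ x k.castSucc - C k *ᵥ xh k.castSucc)
        = (F k.succ *ᵥ x k.succ - C k *ᵥ x k.castSucc)
          - (F k.succ *ᵥ xh k.succ - C k *ᵥ xh k.castSucc) := by abel
    rw [e, h1 k, hb2' k]
  have hsub0 : ∀ (x : Fin (N + 2) → Fin n → ℝ) (f : Fin (N + 2) → Fin p → ℝ),
      F 0 *ᵥ x 0 = B 0 *ᵥ f 0 →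
      F 0 *ᵥ (x - xh) 0 = B 0 *ᵥ (f - fh) 0 := by
    intro x f h0
    simp only [Pi.sub_apply, Matrix.mulVec_sub, h0, hb3']
  -- representation of the linear functional on homogeneous pairs
  have key1 : ∀ (w : Fin (N + 2) → Fin n → ℝ) (g : Fin (N + 2) → Fin p → ℝ),
      (∀ k : Fin (N + 1),
        F k.succ *ᵥ w k.succ - C k *ᵥ w k.castSucc = B k.succ *ᵥ g k.succ) →
      F 0 *ᵥ w 0 = B 0 *ᵥ g 0 →
      lfun l w = Bb H Q R gh pv g w := by
    intro w g h1 h0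
    have T := telescope F C B d w g h1 h0
    have e1 : ∀ k : Fin (N + 1),
        ((F k.castSucc)ᵀ *ᵥ d k.castSucc - (C k)ᵀ *ᵥ d k.succ) ⬝ᵥ w k.castSucc
        = l k.castSucc ⬝ᵥ w k.castSucc
          - (R k *ᵥ (H k *ᵥ pv k.castSucc)) ⬝ᵥ (H k *ᵥ w k.castSucc) := by
      intro k
      rw [hp2 k]
      simp only [sub_dotProduct, add_dotProduct, dotT]
      ring
    rw [Finset.sum_congr rfl (fun k _ => e1 k), hp3, Finset.sum_sub_distrib] at T
    have e2 : ∑ j : Fin (N + 2), ((B j)ᵀ *ᵥ d j) ⬝ᵥ g j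
        = ∑ j : Fin (N + 2), (Q j *ᵥ gh j) ⬝ᵥ g j :=
      Finset.sum_congr rfl fun j _ => by rw [Qgh j]
    have e3 : lfun l w = (∑ k : Fin (N + 1), l k.castSucc ⬝ᵥ w k.castSucc)
        + l (Fin.last (N + 1)) ⬝ᵥ w (Fin.last (N + 1)) :=
      Fin.sum_univ_castSucc (f := fun j => l j ⬝ᵥ w j)
    rw [e2] at T
    simp only [Bb]
    rw [e3]
    linarith [T]
  -- σ2 = Jh gh pv
  have key2 : ∑ k : Fin (N + 2), l k ⬝ᵥ pv k = Jh H Q R gh pv := by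
    have h := key1 pv gh hph1 hph0
    rw [show Bb H Q R gh pv gh pv = Jh H Q R gh pv from rfl] at h
    exact h
  -- cross terms vanish
  have key3 : ∀ (w : Fin (N + 2) → Fin n → ℝ) (g : Fin (N + 2) → Fin p → ℝ),
      (∀ k : Fin (N + 1),
        F k.succ *ᵥ w k.succ - C k *ᵥ w k.castSucc = B k.succ *ᵥ g k.succ) →
      F 0 *ᵥ w 0 = B 0 *ᵥ g 0 →
      (∑ j : Fin (N + 2), (Q j *ᵥ fh j) ⬝ᵥ g j)
        = ∑ k : Fin (N + 1),
            (R k *ᵥ (y k - H k *ᵥ xh k.castSucc)) ⬝ᵥ (H k *ᵥ w k.castSucc) := by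
    intro w g h1 h0
    have T := telescope F C B z w g h1 h0
    have e1 : ∀ k : Fin (N + 1),
        ((F k.castSucc)ᵀ *ᵥ z k.castSucc - (C k)ᵀ *ᵥ z k.succ) ⬝ᵥ w k.castSucc
        = (R k *ᵥ (y k - H k *ᵥ xh k.castSucc)) ⬝ᵥ (H k *ᵥ w k.castSucc) := by
      intro k
      rw [hb1 k, dotT]
    rw [Finset.sum_congr rfl (fun k _ => e1 k), hb4, zero_dotProduct, add_zero] at T
    calc ∑ j : Fin (N + 2), (Q j *ᵥ fh j) ⬝ᵥ g j
        = ∑ j : Fin (N + 2), ((B j)ᵀ *ᵥ z j) ⬝ᵥ g j :=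
          Finset.sum_congr rfl fun j _ => by rw [Qfh j]
      _ = _ := T
  -- decomposition of J on the constraint set
  have hdec : ∀ (f : Fin (N + 2) → Fin p → ℝ) (x : Fin (N + 2) → Fin n → ℝ),
      (∀ k : Fin (N + 1),
        F k.succ *ᵥ x k.succ - C k *ᵥ x k.castSucc = B k.succ *ᵥ f k.succ) →
      F 0 *ᵥ x 0 = B 0 *ᵥ f 0 →
      Jfun H Q R y f x = Jfun H Q R y fh xh + Jh H Q R (f - fh) (x - xh) := by
    intro f x h1 h0
    have hcr := key3 (x - xh) (f - fh) (hsub1 x f h1) (hsub0 x f h0)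
    have hd := Jfun_decomp (H := H) hQs hRs y f fh x xh
    rw [hcr] at hd
    simpa using hd
  -- ρ₀ = ρ
  set ρ := ∑ k : Fin (N + 1), y k ⬝ᵥ (R k *ᵥ (y k - H k *ᵥ xh k.castSucc)) with hρdef
  set σ2 := ∑ k : Fin (N + 2), l k ⬝ᵥ pv k with hσ2def
  have hσ2J : σ2 = Jh H Q R gh pv := key2
  have hσ2nn : 0 ≤ σ2 := by rw [hσ2J]; exact Jh_nonneg (H := H) hQ hR gh pv
  have hρ0 : Jfun H Q R y fh xh = ρ := by
    have t := key3 xh fh hb2' hb3'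
    have e : ∀ k : Fin (N + 1),
        (R k *ᵥ (y k - H k *ᵥ xh k.castSucc)) ⬝ᵥ (H k *ᵥ xh k.castSucc)
          + (R k *ᵥ (y k - H k *ᵥ xh k.castSucc)) ⬝ᵥ (y k - H k *ᵥ xh k.castSucc)
        = y k ⬝ᵥ (R k *ᵥ (y k - H k *ᵥ xh k.castSucc)) := by
      intro k
      rw [← dotProduct_add]
      rw [show H k *ᵥ xh k.castSucc + (y k - H k *ᵥ xh k.castSucc) = y k from by abel]
      rw [dotProduct_comm]
    simp only [Jfun]
    rw [t, hρdef, ← Finset.sum_add_distrib]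
    exact Finset.sum_congr rfl fun k _ => e k
  have h1ρ : 0 ≤ 1 - ρ := by
    obtain ⟨x0, f0, ⟨hc1, hc0⟩, hJle⟩ := hG
    have hd := hdec f0 x0 hc1 hc0
    have hnn := Jh_nonneg (H := H) hQ hR (f0 - fh) (x0 - xh)
    rw [hρ0] at hd
    linarith [hd ▸ hJle]
  have hxhG : xh ∈ GSet F C H B Q R y := by
    refine ⟨fh, ⟨hb2', hb3'⟩, ?_⟩
    rw [hdec fh xh hb2' hb3', hρ0]
    have hz : Jh H Q R (fh - fh) (xh - xh) = 0 := by
      simp [Jh, sub_self]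
    rw [hz]; linarith
  set σh := Real.sqrt (1 - ρ) * Real.sqrt σ2 with hσh
  have hσhnn : 0 ≤ σh := mul_nonneg (Real.sqrt_nonneg _) (Real.sqrt_nonneg _)
  -- upper bound on G
  have bound : ∀ x ∈ GSet F C H B Q R y, |lfun l x - lfun l xh| ≤ σh := by
    intro x hx
    obtain ⟨f, ⟨hc1, hc0⟩, hJle⟩ := hx
    have hlw : lfun l x - lfun l xh = Bb H Q R gh pv (f - fh) (x - xh) := by
      rw [← key1 (x - xh) (f - fh) (hsub1 x f hc1) (hsub0 x f hc0)]
      simp [lfun, dotProduct_sub, Finset.sum_sub_distrib]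
    have hJh : Jh H Q R (f - fh) (x - xh) ≤ 1 - ρ := by
      have hd := hdec f x hc1 hc0
      rw [hρ0] at hd
      linarith [hd ▸ hJle]
    have hcs := Bb_sq_le (H := H) hQ hR (f - fh) (x - xh) gh pv
    rw [← hσ2J] at hcs
    have h2 : (Bb H Q R gh pv (f - fh) (x - xh)) ^ 2 ≤ σ2 * (1 - ρ) := by
      nlinarith [hcs, hσ2nn, hJh, Jh_nonneg (H := H) hQ hR (f - fh) (x - xh)]
    rw [hlw, hσh]
    calc |Bb H Q R gh pv (f - fh) (x - xh)|
        = Real.sqrt ((Bb H Q R gh pv (f - fh) (x - xh)) ^ 2) :=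
          (Real.sqrt_sq_eq_abs _).symm
      _ ≤ Real.sqrt (σ2 * (1 - ρ)) := Real.sqrt_le_sqrt h2
      _ = Real.sqrt σ2 * Real.sqrt (1 - ρ) := Real.sqrt_mul hσ2nn _
      _ = Real.sqrt (1 - ρ) * Real.sqrt σ2 := mul_comm _ _
  -- attainment
  set t0 := Real.sqrt ((1 - ρ) / σ2) with ht0
  have ht0σ : t0 * σ2 = σh := by
    rw [ht0, hσh, Real.sqrt_div h1ρ, div_mul_eq_mul_div, mul_div_assoc, Real.div_sqrt]
  have ht0sq : t0 ^ 2 * σ2 ≤ 1 - ρ := by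
    have hsq : t0 ^ 2 = (1 - ρ) / σ2 := Real.sq_sqrt (div_nonneg h1ρ hσ2nn)
    rcases eq_or_lt_of_le hσ2nn with h | h
    · rw [← h]; simpa using h1ρ
    · rw [hsq, div_mul_cancel₀ _ h.ne']
  have memG : ∀ s : ℝ, s ^ 2 * σ2 ≤ 1 - ρ →
      xh + s • pv ∈ GSet F C H B Q R y := by
    intro s hs
    refine ⟨fh + s • gh, ⟨fun k => ?_, ?_⟩, ?_⟩
    · simp only [Pi.add_apply, Pi.smul_apply, Matrix.mulVec_add, Matrix.mulVec_smul]
      have e : F k.succ *ᵥ xh k.succ + s • (F k.succ *ᵥ pv k.succ)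
          - (C k *ᵥ xh k.castSucc + s • (C k *ᵥ pv k.castSucc))
          = (F k.succ *ᵥ xh k.succ - C k *ᵥ xh k.castSucc)
            + s • (F k.succ *ᵥ pv k.succ - C k *ᵥ pv k.castSucc) := by
        rw [smul_sub]; abel
      rw [e, hb2' k, hph1 k]
    · simp only [Pi.add_apply, Pi.smul_apply, Matrix.mulVec_add, Matrix.mulVec_smul,
        hb3', hph0]
    · have hc1 : ∀ k : Fin (N + 1),
          F k.succ *ᵥ (xh + s • pv) k.succ - C k *ᵥ (xh + s • pv) k.castSucc
            = B k.succ *ᵥ (fh + s • gh) k.succ := by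
        intro k
        simp only [Pi.add_apply, Pi.smul_apply, Matrix.mulVec_add, Matrix.mulVec_smul]
        have e : F k.succ *ᵥ xh k.succ + s • (F k.succ *ᵥ pv k.succ)
            - (C k *ᵥ xh k.castSucc + s • (C k *ᵥ pv k.castSucc))
            = (F k.succ *ᵥ xh k.succ - C k *ᵥ xh k.castSucc)
              + s • (F k.succ *ᵥ pv k.succ - C k *ᵥ pv k.castSucc) := by
          rw [smul_sub]; abel
        rw [e, hb2' k, hph1 k]
      have hc0 : F 0 *ᵥ (xh + s • pv) 0 = B 0 *ᵥ (fh + s • gh) 0 := by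
        simp only [Pi.add_apply, Pi.smul_apply, Matrix.mulVec_add, Matrix.mulVec_smul,
          hb3', hph0]
      rw [hdec (fh + s • gh) (xh + s • pv) hc1 hc0]
      rw [show fh + s • gh - fh = s • gh from by abel,
        show xh + s • pv - xh = s • pv from by abel]
      rw [Jh_smul, hρ0, ← hσ2J]
      linarith
  have lfun_shift : ∀ s : ℝ, lfun l (xh + s • pv) = lfun l xh + s * σ2 := by
    intro s
    rw [hσ2def]
    simp only [lfun, Pi.add_apply, Pi.smul_apply, dotProduct_add,
      dotProduct_smul, smul_eq_mul, Finset.sum_add_distrib, Finset.mul_sum]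
  have hxpG := memG t0 ht0sq
  have hxmG := memG (-t0) (by rw [neg_pow]; simpa using ht0sq)
  have hlp : lfun l (xh + t0 • pv) - lfun l xh = σh := by
    rw [lfun_shift t0, ht0σ]; ring
  have hlm : lfun l xh - lfun l (xh + (-t0) • pv) = σh := by
    rw [lfun_shift (-t0)]
    have : -t0 * σ2 = -σh := by rw [← ht0σ]; ring
    rw [this]; ring
  -- the supremum over G
  have hsup : (⨆ x ∈ GSet F C H B Q R y, (↑|lfun l x - lfun l xh| : EReal))
      = (σh : EReal) := by
    apply le_antisymm
    · exact iSup₂_le fun x hx => EReal.coe_le_coe_iff.2 (bound x hx)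
    · refine le_iSup₂_of_le (xh + t0 • pv) hxpG ?_
      have : |lfun l (xh + t0 • pv) - lfun l xh| = σh := by
        rw [hlp, abs_of_nonneg hσhnn]
      rw [this]
  have hl' : (∑ k : Fin (N + 2), l k ⬝ᵥ xh k) = lfun l xh := rfl
  constructor
  · unfold IsMinimaxEstimate
    rw [hl', hsup]
    apply le_antisymm
    · refine le_iInf₂ fun xt hxt => ?_
      have tri : 2 * σh ≤ |lfun l (xh + t0 • pv) - lfun l xt|
          + |lfun l (xh + (-t0) • pv) - lfun l xt| := by
        have h1 : |lfun l (xh + t0 • pv) - lfun l (xh + (-t0) • pv)|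
            ≤ |lfun l (xh + t0 • pv) - lfun l xt|
              + |lfun l xt - lfun l (xh + (-t0) • pv)| := abs_sub_le _ _ _
        have h2 : lfun l (xh + t0 • pv) - lfun l (xh + (-t0) • pv) = 2 * σh := by
          linarith [hlp, hlm]
        rw [h2, abs_of_nonneg (by linarith), abs_sub_comm (lfun l xt)] at h1
        linarith
      have hmax : σh ≤ |lfun l (xh + t0 • pv) - lfun l xt|
          ∨ σh ≤ |lfun l (xh + (-t0) • pv) - lfun l xt| := by
        by_contra hcon
        push_neg at hcon
        linarith [hcon.1, hcon.2]
      rcases hmax with h | h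
      · exact le_iSup₂_of_le (xh + t0 • pv) hxpG (EReal.coe_le_coe_iff.2 h)
      · exact le_iSup₂_of_le (xh + (-t0) • pv) hxmG (EReal.coe_le_coe_iff.2 h)
    · exact iInf₂_le_of_le xh hxhG hsup.le
  · rw [hl', hsup, hσh]
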